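/- Let G be a directed graph on n vertices with 2-feedback number τ := τ₂(G). Then the family of monotone Boolean networks with interaction graph contained in G can be fixed by a word of length at most τ·n² + 3n. -/

import Mathlib

/-- One asynchronous update step: replace coordinate `i` of `x` by `f x i`. -/
def updateStep {n : ℕ} (f : (Fin n → Bool) → (Fin n → Bool)) (x : Fin n → Bool)
    (i : Fin n) : Fin n → Bool :=
  Function.update x i (f x i)

/-- Action of a word on a state. -/
def applyWord {n : ℕ} (f : (Fin n → Bool) → (Fin n → Bool)) :
    List (Fin n) → (Fin n → Bool) → (Fin n → Bool)
  | [], x => x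
  | i :: w, x => applyWord f w (updateStep f x i)

/-- A word `w` fixes `f` if applying it to any state yields a fixed point of `f`. -/
def Fixes {n : ℕ} (f : (Fin n → Bool) → (Fin n → Bool)) (w : List (Fin n)) : Prop :=
  ∀ x, f (applyWord f w x) = applyWord f w x

/-- Arc of the asynchronous graph. -/
def AsyncArc {n : ℕ} (f : (Fin n → Bool) → (Fin n → Bool))
    (x y : Fin n → Bool) : Prop :=
  ∃ i : Fin n, f x i ≠ x i ∧ y = Function.update x i (f x i)

/-- `w` is induced by a path of the `n`-cube. -/
def IsPathWord (n : ℕ) (w : List (Fin n)) : Prop :=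
  ∃ xs : List (Fin n → Bool), xs.Nodup ∧ xs.length = w.length + 1 ∧
    ∀ k (hk : k < w.length),
      xs.getD (k + 1) default =
        Function.update (xs.getD k default) (w.get ⟨k, hk⟩)
          (!(xs.getD k default (w.get ⟨k, hk⟩)))

/-- `W` contains every `n`-path-word as a subword. -/
def PathUniversal (n : ℕ) (W : List (Fin n)) : Prop :=
  ∀ w : List (Fin n), IsPathWord n w → w.Sublist W

/-- `f_i` depends on coordinate `j`. -/
def DependsOnCoord {n : ℕ} (f : (Fin n → Bool) → (Fin n → Bool)) (i j : Fin n) : Prop :=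
  ∃ x : Fin n → Bool, f (Function.update x j (!(x j))) i ≠ f x i

/-- The interaction graph of `f` is a subgraph of the directed graph `E`. -/
def InteractionSubgraph {n : ℕ} (f : (Fin n → Bool) → (Fin n → Bool))
    (E : Fin n → Fin n → Prop) : Prop :=
  ∀ i j : Fin n, DependsOnCoord f i j → E j i

/-- `l` is a directed cycle of the digraph `E` contained in the vertex set `S`. -/
def IsDiCycle {n : ℕ} (E : Fin n → Fin n → Prop) (S : Set (Fin n))
    (l : List (Fin n)) : Prop :=
  l ≠ [] ∧ l.Nodup ∧ (∀ v ∈ l, v ∈ S) ∧ l.Chain' E ∧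
    ∀ a b, l.head? = some a → l.getLast? = some b → E b a

namespace BN
open Function

variable {n : ℕ} {f : (Fin n → Bool) → (Fin n → Bool)}

theorem applyWord_append (w₁ w₂ : List (Fin n)) (x : Fin n → Bool) :
    applyWord f (w₁ ++ w₂) x = applyWord f w₂ (applyWord f w₁ x) := by
  induction w₁ generalizing x with
  | nil => rfl
  | cons a w ih => simp [applyWord, ih]

theorem applyWord_eq_of_not_mem {w : List (Fin n)} {a : Fin n} (h : a ∉ w)
    (x : Fin n → Bool) : applyWord f w x a = x a := by
  induction w generalizing x with
  | nil => rfl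
  | cons b w ih =>
    simp only [List.mem_cons, not_or] at h
    simp only [applyWord]
    rw [ih h.2]
    simp [updateStep, Function.update_apply, h.1]

/-- Insensitivity: f x i depends only on coordinates it depends on. -/
theorem eval_eq_of_agree {x y : Fin n → Bool} (i : Fin n)
    (h : ∀ j, DependsOnCoord f i j → x j = y j) : f x i = f y i := by
  classical
  generalize hc : (Finset.univ.filter (fun j => x j ≠ y j)).card = c
  induction c generalizing y with
  | zero =>
    have : x = y := by
      funext j
      by_contra hj
      have : j ∈ Finset.univ.filter (fun j => x j ≠ y j) := by simp [hj]
      rw [Finset.card_eq_zero] at hc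
      simp [hc] at this
    rw [this]
  | succ c ih =>
    have hne : (Finset.univ.filter (fun j => x j ≠ y j)).Nonempty := by
      rw [← Finset.card_pos, hc]; omega
    obtain ⟨j₀, hj₀⟩ := hne
    simp only [Finset.mem_filter] at hj₀
    have hnd : ¬ DependsOnCoord f i j₀ := fun hd => hj₀.2 (h j₀ hd)
    have hflip : ∀ u : Fin n → Bool, f (Function.update u j₀ (!(u j₀))) i = f u i := by
      intro u
      by_contra hu
      exact hnd ⟨u, hu⟩
    set y' := Function.update y j₀ (x j₀) with hy'
    have h1 : f y' i = f y i := by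
      have : y' = Function.update y j₀ (!(y j₀)) := by
        rw [hy']
        revert hj₀
        cases hx : x j₀ <;> cases hy : y j₀ <;> simp [hx, hy]
      rw [this, hflip]
    have h2 : f x i = f y' i := by
      apply ih
      · intro j hd
        by_cases hj : j = j₀
        · subst hj; simp [hy']
        · rw [hy', Function.update_apply, if_neg hj]; exact h j hd
      · have : (Finset.univ.filter (fun j => x j ≠ y' j))
            = (Finset.univ.filter (fun j => x j ≠ y j)).erase j₀ := by
          ext j
          by_cases hj : j = j₀ <;>
            simp [hy', Finset.mem_erase, hj, Function.update_apply]
        rw [this, Finset.card_erase_of_mem, hc] <;> simp [hj₀.2]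
    rw [h2, h1]

theorem le_update {x : Fin n → Bool} {i : Fin n} {b : Bool} (h : x i ≤ b) :
    x ≤ Function.update x i b := by
  intro j
  by_cases hj : j = i
  · subst hj; simpa
  · simp [Function.update_apply, hj]

theorem update_le {x : Fin n → Bool} {i : Fin n} {b : Bool} (h : b ≤ x i) :
    Function.update x i b ≤ x := by
  intro j
  by_cases hj : j = i
  · subst hj; simpa
  · simp [Function.update_apply, hj]

/-- Absorption: re-reading coordinate i after writing it gives the same value. -/
theorem absorb (hf : Monotone f) (x : Fin n → Bool) (i : Fin n) :
    f (Function.update x i (f x i)) i = f x i := by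
  by_cases h : x i = f x i
  · rw [← h, Function.update_eq_self, ← h]
  · cases hb : f x i with
    | true =>
      have hx : x ≤ Function.update x i (f x i) := le_update (by simp [hb])
      have := hf hx i
      rw [hb] at this
      exact le_antisymm (by simp) this
    | false =>
      have hx : Function.update x i (f x i) ≤ x := update_le (by simp [hb])
      have := hf hx i
      rw [hb] at this
      exact le_antisymm this (by simp)

end BN
namespace BN

variable {n : ℕ} {f : (Fin n → Bool) → (Fin n → Bool)}

def FixedOn (f : (Fin n → Bool) → (Fin n → Bool)) (S : Finset (Fin n)) (x : Fin n → Bool) : Prop :=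
  ∀ u ∈ S, f x u = x u

def InvUp (f : (Fin n → Bool) → (Fin n → Bool)) (S : Finset (Fin n)) (x : Fin n → Bool) : Prop :=
  ∀ u ∈ S, x u = true → f x u = true

def InvDn (f : (Fin n → Bool) → (Fin n → Bool)) (S : Finset (Fin n)) (x : Fin n → Bool) : Prop :=
  ∀ u ∈ S, x u = false → f x u = false

theorem FixedOn.invUp {S : Finset (Fin n)} {x} (h : FixedOn f S x) : InvUp f S x :=
  fun u hu ht => (h u hu).trans ht

theorem FixedOn.invDn {S : Finset (Fin n)} {x} (h : FixedOn f S x) : InvDn f S x :=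
  fun u hu ht => (h u hu).trans ht

theorem step_up (hf : Monotone f) {S : Finset (Fin n)} {x} (hx : InvUp f S x)
    {i : Fin n} (hi : i ∈ S) :
    x ≤ updateStep f x i ∧ InvUp f S (updateStep f x i) := by
  have hxi : x i ≤ f x i := by
    cases h : x i
    · simp
    · rw [hx i hi h]
  have hle : x ≤ updateStep f x i := le_update hxi
  refine ⟨hle, ?_⟩
  intro u hu ht
  have hmono := hf hle
  by_cases huv : u = i
  · subst huv
    have h1 : f x u ≤ f (updateStep f x u) u := hmono u
    have h2 : updateStep f x u u = f x u := by simp [updateStep]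
    rw [h2] at ht
    rw [ht] at h1
    exact le_antisymm (by simp) h1
  · have h2 : updateStep f x i u = x u := by simp [updateStep, Function.update_apply, huv]
    rw [h2] at ht
    have := hx u hu ht
    have h1 : f x u ≤ f (updateStep f x i) u := hmono u
    rw [this] at h1
    exact le_antisymm (by simp) h1

theorem step_dn (hf : Monotone f) {S : Finset (Fin n)} {x} (hx : InvDn f S x)
    {i : Fin n} (hi : i ∈ S) :
    updateStep f x i ≤ x ∧ InvDn f S (updateStep f x i) := by
  have hxi : f x i ≤ x i := by
    cases h : x i
    · rw [hx i hi h]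
    · simp
  have hle : updateStep f x i ≤ x := update_le hxi
  refine ⟨hle, ?_⟩
  intro u hu ht
  have hmono := hf hle
  by_cases huv : u = i
  · subst huv
    have h1 : f (updateStep f x u) u ≤ f x u := hmono u
    have h2 : updateStep f x u u = f x u := by simp [updateStep]
    rw [h2] at ht
    rw [ht] at h1
    exact le_antisymm h1 (by simp)
  · have h2 : updateStep f x i u = x u := by simp [updateStep, Function.update_apply, huv]
    rw [h2] at ht
    have := hx u hu ht
    have h1 : f (updateStep f x i) u ≤ f x u := hmono u
    rw [this] at h1
    exact le_antisymm h1 (by simp)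

theorem word_up (hf : Monotone f) {S : Finset (Fin n)} {w : List (Fin n)}
    (hw : ∀ a ∈ w, a ∈ S) :
    ∀ {x}, InvUp f S x → x ≤ applyWord f w x ∧ InvUp f S (applyWord f w x) := by
  induction w with
  | nil => intro x hx; exact ⟨le_refl _, hx⟩
  | cons a w ih =>
    intro x hx
    have ha : a ∈ S := hw a (by simp)
    obtain ⟨h1, h2⟩ := step_up hf hx ha
    obtain ⟨h3, h4⟩ := ih (fun b hb => hw b (by simp [hb])) h2
    exact ⟨le_trans h1 h3, h4⟩

theorem word_dn (hf : Monotone f) {S : Finset (Fin n)} {w : List (Fin n)}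
    (hw : ∀ a ∈ w, a ∈ S) :
    ∀ {x}, InvDn f S x → applyWord f w x ≤ x ∧ InvDn f S (applyWord f w x) := by
  induction w with
  | nil => intro x hx; exact ⟨le_refl _, hx⟩
  | cons a w ih =>
    intro x hx
    have ha : a ∈ S := hw a (by simp)
    obtain ⟨h1, h2⟩ := step_dn hf hx ha
    obtain ⟨h3, h4⟩ := ih (fun b hb => hw b (by simp [hb])) h2
    exact ⟨le_trans h3 h1, h4⟩

theorem applyWord_noop {w : List (Fin n)} :
    ∀ {x}, (∀ a ∈ w, f x a = x a) → applyWord f w x = x := by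
  induction w with
  | nil => intro x _; rfl
  | cons a w ih =>
    intro x hx
    have h1 : updateStep f x a = x := by
      have := hx a (by simp)
      simp [updateStep, this]
    simp only [applyWord, h1]
    exact ih (fun b hb => hx b (by simp [hb]))

theorem FixedOn.applyWord_noop {S : Finset (Fin n)} {w : List (Fin n)} {x}
    (h : FixedOn f S x) (hw : ∀ a ∈ w, a ∈ S) : applyWord f w x = x :=
  BN.applyWord_noop (fun a ha => h a (hw a ha))

theorem pass_fix_up (hf : Monotone f) {S : Finset (Fin n)} {w : List (Fin n)}
    (hw : ∀ a ∈ w, a ∈ S) :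
    ∀ {x}, InvUp f S x → applyWord f w x = x → ∀ a ∈ w, f x a = x a := by
  induction w with
  | nil => intro x _ _ a ha; simp at ha
  | cons b w ih =>
    intro x hx heq a ha
    have hb : b ∈ S := hw b (by simp)
    obtain ⟨h1, h2⟩ := step_up hf hx hb
    have h3 : updateStep f x b ≤ applyWord f w (updateStep f x b) :=
      (word_up hf (fun c hc => hw c (by simp [hc])) h2).1
    have heq' : applyWord f w (updateStep f x b) = x := heq
    have hxx : updateStep f x b = x := by
      refine le_antisymm ?_ h1
      calc updateStep f x b ≤ applyWord f w (updateStep f x b) := h3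
        _ = x := heq'
    have hfb : f x b = x b := by
      have : updateStep f x b b = x b := by rw [hxx]
      simpa [updateStep] using this
    rcases List.mem_cons.mp ha with h | h
    · subst h; exact hfb
    · refine ih (fun c hc => hw c (by simp [hc])) (x := x) hx ?_ a h
      have h0 : applyWord f w (updateStep f x b) = x := heq
      rwa [hxx] at h0

theorem pass_fix_dn (hf : Monotone f) {S : Finset (Fin n)} {w : List (Fin n)}
    (hw : ∀ a ∈ w, a ∈ S) :
    ∀ {x}, InvDn f S x → applyWord f w x = x → ∀ a ∈ w, f x a = x a := by
  induction w with
  | nil => intro x _ _ a ha; simp at ha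
  | cons b w ih =>
    intro x hx heq a ha
    have hb : b ∈ S := hw b (by simp)
    obtain ⟨h1, h2⟩ := step_dn hf hx hb
    have h3 : applyWord f w (updateStep f x b) ≤ updateStep f x b :=
      (word_dn hf (fun c hc => hw c (by simp [hc])) h2).1
    have heq' : applyWord f w (updateStep f x b) = x := heq
    have hxx : updateStep f x b = x := by
      refine le_antisymm h1 ?_
      calc x = applyWord f w (updateStep f x b) := heq'.symm
        _ ≤ updateStep f x b := h3
    have hfb : f x b = x b := by
      have : updateStep f x b b = x b := by rw [hxx]
      simpa [updateStep] using this
    rcases List.mem_cons.mp ha with h | h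
    · subst h; exact hfb
    · refine ih (fun c hc => hw c (by simp [hc])) (x := x) hx ?_ a h
      have h0 : applyWord f w (updateStep f x b) = x := heq
      rwa [hxx] at h0

end BN
namespace BN

variable {n : ℕ} {f : (Fin n → Bool) → (Fin n → Bool)}

noncomputable def wtUp (S : Finset (Fin n)) (x : Fin n → Bool) : ℕ :=
  (S.filter (fun u => x u = true)).card

noncomputable def wtDn (S : Finset (Fin n)) (x : Fin n → Bool) : ℕ :=
  (S.filter (fun u => x u = false)).card

theorem wtUp_lt {S : Finset (Fin n)} {x y : Fin n → Bool} (hle : x ≤ y) (hne : x ≠ y)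
    (hout : ∀ u, u ∉ S → x u = y u) : wtUp S x < wtUp S y := by
  classical
  have hsub : S.filter (fun u => x u = true) ⊆ S.filter (fun u => y u = true) := by
    intro u hu
    simp only [Finset.mem_filter] at hu ⊢
    refine ⟨hu.1, ?_⟩
    have := hle u
    rw [hu.2] at this
    exact le_antisymm (by simp) this
  obtain ⟨u₀, hu₀⟩ : ∃ u₀, x u₀ ≠ y u₀ := by
    by_contra h
    push_neg at h
    exact hne (funext h)
  have hu₀S : u₀ ∈ S := by
    by_contra h
    exact hu₀ (hout u₀ h)
  have hx0 : x u₀ = false := by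
    cases h : x u₀
    · rfl
    · exfalso
      have := hle u₀
      rw [h] at this
      exact hu₀ (h.trans (le_antisymm (by simp) this).symm)
  have hy0 : y u₀ = true := by
    cases h : y u₀
    · exact absurd (hx0.trans h.symm) hu₀
    · rfl
  apply Finset.card_lt_card
  refine ⟨hsub, fun hsup => ?_⟩
  have h1 : u₀ ∈ S.filter (fun u => y u = true) := by simp [hu₀S, hy0]
  have h2 := hsup h1
  simp only [Finset.mem_filter] at h2
  rw [h2.2] at hx0; exact Bool.noConfusion hx0

theorem wtDn_lt {S : Finset (Fin n)} {x y : Fin n → Bool} (hle : y ≤ x) (hne : x ≠ y)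
    (hout : ∀ u, u ∉ S → x u = y u) : wtDn S x < wtDn S y := by
  classical
  have hsub : S.filter (fun u => x u = false) ⊆ S.filter (fun u => y u = false) := by
    intro u hu
    simp only [Finset.mem_filter] at hu ⊢
    refine ⟨hu.1, ?_⟩
    have := hle u
    rw [hu.2] at this
    exact le_antisymm this (by simp)
  obtain ⟨u₀, hu₀⟩ : ∃ u₀, x u₀ ≠ y u₀ := by
    by_contra h
    push_neg at h
    exact hne (funext h)
  have hu₀S : u₀ ∈ S := by
    by_contra h
    exact hu₀ (hout u₀ h)
  have hx0 : x u₀ = true := by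
    cases h : x u₀
    · exfalso
      have := hle u₀
      rw [h] at this
      have : y u₀ = false := le_antisymm this (by simp)
      exact hu₀ (h.trans this.symm)
    · rfl
  have hy0 : y u₀ = false := by
    cases h : y u₀
    · rfl
    · exact absurd (hx0.trans h.symm) hu₀
  apply Finset.card_lt_card
  refine ⟨hsub, fun hsup => ?_⟩
  have h1 : u₀ ∈ S.filter (fun u => y u = false) := by simp [hu₀S, hy0]
  have h2 := hsup h1
  simp only [Finset.mem_filter] at h2
  rw [h2.2] at hx0; exact Bool.noConfusion hx0

theorem applyWord_outside_eq {w : List (Fin n)} {S : Finset (Fin n)}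
    (hw : ∀ a ∈ w, a ∈ S) (x : Fin n → Bool) :
    ∀ u, u ∉ S → applyWord f w x u = x u := by
  intro u hu
  apply applyWord_eq_of_not_mem
  intro hmem
  exact hu (hw u hmem)

/-- Iterating the pass word. -/
theorem passes_fix_up (hf : Monotone f) {S : Finset (Fin n)} {w : List (Fin n)}
    (hw : ∀ a ∈ w, a ∈ S) (hcov : ∀ a ∈ S, a ∈ w) :
    ∀ (j : ℕ) (x), InvUp f S x → S.card ≤ wtUp S x + j →
      FixedOn f S (applyWord f (List.flatten (List.replicate j w)) x) := by
  classical
  intro j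
  induction j with
  | zero =>
    intro x hx hcard
    simp only [List.replicate, List.flatten, applyWord]
    have hfull : S.filter (fun u => x u = true) = S := by
      apply Finset.eq_of_subset_of_card_le (Finset.filter_subset _ _)
      simpa [wtUp] using hcard
    intro u hu
    have hxu : x u = true := by
      have : u ∈ S.filter (fun u => x u = true) := by rw [hfull]; exact hu
      simpa using (Finset.mem_filter.mp this).2
    rw [hxu]
    exact hx u hu hxu
  | succ j ih =>
    intro x hx hcard
    have hrep : List.flatten (List.replicate (j+1) w) = w ++ List.flatten (List.replicate j w) := by
      simp [List.replicate_succ]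
    rw [hrep, applyWord_append]
    set y := applyWord f w x with hy
    by_cases heq : y = x
    · have hfix : FixedOn f S x := by
        intro u hu
        exact pass_fix_up hf hw hx heq u (hcov u hu)
      rw [heq]
      have : applyWord f (List.flatten (List.replicate j w)) x = x := by
        apply hfix.applyWord_noop
        intro a ha
        simp only [List.mem_flatten] at ha
        obtain ⟨l, hl, hal⟩ := ha
        exact hw a ((List.eq_of_mem_replicate hl) ▸ hal)
      rw [this]
      exact hfix
    · obtain ⟨hle, hinv⟩ := word_up hf hw hx
      have hwt : wtUp S x < wtUp S y :=
        wtUp_lt hle (fun h => heq h.symm) (fun u hu => (applyWord_outside_eq hw x u hu).symm)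
      exact ih y hinv (by omega)

theorem passes_fix_dn (hf : Monotone f) {S : Finset (Fin n)} {w : List (Fin n)}
    (hw : ∀ a ∈ w, a ∈ S) (hcov : ∀ a ∈ S, a ∈ w) :
    ∀ (j : ℕ) (x), InvDn f S x → S.card ≤ wtDn S x + j →
      FixedOn f S (applyWord f (List.flatten (List.replicate j w)) x) := by
  classical
  intro j
  induction j with
  | zero =>
    intro x hx hcard
    simp only [List.replicate, List.flatten, applyWord]
    have hfull : S.filter (fun u => x u = false) = S := by
      apply Finset.eq_of_subset_of_card_le (Finset.filter_subset _ _)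
      simpa [wtDn] using hcard
    intro u hu
    have hxu : x u = false := by
      have : u ∈ S.filter (fun u => x u = false) := by rw [hfull]; exact hu
      simpa using (Finset.mem_filter.mp this).2
    rw [hxu]
    exact hx u hu hxu
  | succ j ih =>
    intro x hx hcard
    have hrep : List.flatten (List.replicate (j+1) w) = w ++ List.flatten (List.replicate j w) := by
      simp [List.replicate_succ]
    rw [hrep, applyWord_append]
    set y := applyWord f w x with hy
    by_cases heq : y = x
    · have hfix : FixedOn f S x := by
        intro u hu
        exact pass_fix_dn hf hw hx heq u (hcov u hu)
      rw [heq]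
      have : applyWord f (List.flatten (List.replicate j w)) x = x := by
        apply hfix.applyWord_noop
        intro a ha
        simp only [List.mem_flatten] at ha
        obtain ⟨l, hl, hal⟩ := ha
        exact hw a ((List.eq_of_mem_replicate hl) ▸ hal)
      rw [this]
      exact hfix
    · obtain ⟨hle, hinv⟩ := word_dn hf hw hx
      have hwt : wtDn S x < wtDn S y :=
        wtDn_lt hle (fun h => heq h.symm) (fun u hu => (applyWord_outside_eq hw x u hu).symm)
      exact ih y hinv (by omega)

/-- after updating one new coordinate of a fixed-on-S state, one of the invariants holds. -/
theorem stage_invariant (hf : Monotone f) {S : Finset (Fin n)} {y : Fin n → Bool}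
    (hfix : FixedOn f S y) (v : Fin n) :
    InvUp f (insert v S) (updateStep f y v) ∨ InvDn f (insert v S) (updateStep f y v) := by
  by_cases h : f y v = y v
  · left
    have hy' : updateStep f y v = y := by simp [updateStep, h]
    rw [hy']
    intro u hu ht
    rcases Finset.mem_insert.mp hu with h1 | h1
    · subst h1; rw [h, ht]
    · rw [hfix u h1, ht]
  · cases hb : f y v with
    | true =>
      left
      have hyv : y v = false := by
        cases h2 : y v
        · rfl
        · exact absurd (hb.trans h2.symm) h
      have hle : y ≤ updateStep f y v := le_update (by rw [hb, hyv]; simp)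
      have hmono := hf hle
      intro u hu ht
      rcases Finset.mem_insert.mp hu with h1 | h1
      · subst h1
        have := hmono u
        rw [hb] at this
        exact le_antisymm (by simp) this
      · by_cases huv : u = v
        · subst huv
          have := hmono u
          rw [hb] at this
          exact le_antisymm (by simp) this
        · have hxu : updateStep f y v u = y u := by simp [updateStep, Function.update_apply, huv]
          rw [hxu] at ht
          have h3 := hfix u h1
          rw [ht] at h3
          have := hmono u
          rw [h3] at this
          exact le_antisymm (by simp) this
    | false =>
      right
      have hyv : y v = true := by
        cases h2 : y v
        · exact absurd (hb.trans h2.symm) h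
        · rfl
      have hle : updateStep f y v ≤ y := update_le (by rw [hb, hyv]; simp)
      have hmono := hf hle
      intro u hu ht
      rcases Finset.mem_insert.mp hu with h1 | h1
      · subst h1
        have := hmono u
        rw [hb] at this
        exact le_antisymm this (by simp)
      · by_cases huv : u = v
        · subst huv
          have := hmono u
          rw [hb] at this
          exact le_antisymm this (by simp)
        · have hxu : updateStep f y v u = y u := by simp [updateStep, Function.update_apply, huv]
          rw [hxu] at ht
          have h3 := hfix u h1
          rw [ht] at h3
          have := hmono u
          rw [h3] at this
          exact le_antisymm this (by simp)

end BN
namespace BN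

variable {n : ℕ} {f : (Fin n → Bool) → (Fin n → Bool)}

/-- Values along a sweep word: coordinate `v t` is untouched before step `t`,
and holds value `f (state before step t) (v t)` afterwards. -/
theorem sweep_val (w : List (Fin n)) (hwnd : w.Nodup) (v : ℕ → Fin n)
    (hv : ∀ t (ht : t < w.length), w.get ⟨t, ht⟩ = v t) (x : Fin n → Bool) :
    ∀ i, i ≤ w.length → ∀ t (ht : t < w.length),
      applyWord f (w.take i) x (v t) =
        if t < i then f (applyWord f (w.take t) x) (v t) else x (v t) := by
  have hinj : ∀ t s, t < w.length → s < w.length → v t = v s → t = s := by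
    intro t s ht hs hts
    have := (hwnd.get_inj_iff (i := ⟨t, ht⟩) (j := ⟨s, hs⟩)).mp (by rw [hv t ht, hv s hs, hts])
    exact Fin.mk.inj_iff.mp this
  intro i
  induction i with
  | zero => intro _ t ht; simp [applyWord]
  | succ i ih =>
    intro hik t ht
    have hi : i < w.length := by omega
    have htk : w.take (i + 1) = w.take i ++ [v i] := by
      rw [List.take_succ, List.getElem?_eq_getElem hi]
      have : w[i] = v i := by rw [← hv i hi]; simp
      rw [this]
      rfl
    rw [htk, applyWord_append]
    have hsingle : ∀ (s : Fin n → Bool), applyWord f [v i] s = updateStep f s (v i) := by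
      intro s; rfl
    rw [hsingle]
    by_cases hti : t = i
    · subst hti
      simp only [updateStep, Function.update_self]
      rw [if_pos (by omega)]
    · have hvne : v t ≠ v i := fun h => hti (hinj t i ht hi h)
      simp only [updateStep, Function.update_apply, if_neg hvne]
      rw [ih (by omega) t ht]
      have : (t < i + 1) ↔ (t < i) := by omega
      simp only [this]

/-- The double-sweep word `b ++ b.reverse` fixes all coordinates of a "tree block" `b`. -/
theorem block_fix (hf : Monotone f) (b : List (Fin n)) (hnd : b.Nodup)
    (u : ℕ → Fin n) (hu : ∀ t (ht : t < b.length), b.get ⟨t, ht⟩ = u t)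
    (pidx : ℕ → ℕ)
    (Hpar : ∀ t, t < b.length - 1 → t < pidx t ∧ pidx t < b.length)
    (Hdep : ∀ t, t < b.length → ∀ a, DependsOnCoord f (u t) a →
       a = u t ∨ (t < b.length - 1 ∧ a = u (pidx t)) ∨
       (∃ c, c < b.length - 1 ∧ pidx c = t ∧ a = u c) ∨ a ∉ b)
    (x₀ : Fin n → Bool) :
    ∀ v ∈ b, f (applyWord f (b ++ b.reverse) x₀) v = applyWord f (b ++ b.reverse) x₀ v := by
  classical
  set k := b.length with hkdef
  have hinj : ∀ t s, t < k → s < k → u t = u s → t = s := by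
    intro t s ht hs hts
    have := (hnd.get_inj_iff (i := ⟨t, ht⟩) (j := ⟨s, hs⟩)).mp (by rw [hu t ht, hu s hs, hts])
    exact Fin.mk.inj_iff.mp this
  have humem : ∀ t, t < k → u t ∈ b := by
    intro t ht; rw [← hu t ht]; exact List.get_mem b ⟨t, ht⟩
  -- reverse word setup
  set ρ := b.reverse with hρdef
  have hρlen : ρ.length = k := by simp [hρdef, hkdef]
  have hρnd : ρ.Nodup := by simp [hρdef]; exact hnd
  have hrv : ∀ j (hj : j < ρ.length), ρ.get ⟨j, hj⟩ = u (k - 1 - j) := by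
    intro j hj
    have hj' : j < k := by rwa [hρlen] at hj
    have h2 : k - 1 - j < k := by omega
    have : b.reverse.get ⟨b.length - 1 - (k - 1 - j), by simp [hkdef]; omega⟩ = b.get ⟨k - 1 - j, h2⟩ := by
      simp only [List.get_eq_getElem, List.getElem_reverse]; congr 1; omega
    have heq : (⟨b.length - 1 - (k - 1 - j), by simp [hkdef]; omega⟩ : Fin ρ.length) = ⟨j, hj⟩ := by
      apply Fin.ext; simp [hkdef]; omega
    rw [← hu _ h2, ← this]
    exact congrArg _ heq.symm
  -- states
  set X : ℕ → (Fin n → Bool) := fun i => applyWord f (b.take i) x₀ with hX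
  set y : Fin n → Bool := applyWord f b x₀ with hy
  set Z : ℕ → (Fin n → Bool) := fun j => applyWord f (ρ.take j) y with hZ
  set z : Fin n → Bool := applyWord f ρ y with hz
  have hyX : y = X k := by rw [hy, hX]; simp [hkdef]
  have hzZ : z = Z k := by rw [hz, hZ]; simp [← hρlen]
  set val : ℕ → Bool := fun t => f (X t) (u t) with hval
  set dval : ℕ → Bool := fun t => f (Z (k - 1 - t)) (u t) with hdval
  have hXv : ∀ i, i ≤ k → ∀ t, t < k → X i (u t) = if t < i then val t else x₀ (u t) := by
    intro i hi t ht
    exact sweep_val b hnd u hu x₀ i hi t ht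
  have hyv : ∀ t, t < k → y (u t) = val t := by
    intro t ht
    rw [hyX, hXv k le_rfl t ht, if_pos ht]
  have hZv : ∀ j, j ≤ k → ∀ t, t < k → Z j (u t) = if k - 1 - t < j then dval t else y (u t) := by
    intro j hj t ht
    have h2 : k - 1 - t < ρ.length := by omega
    have := sweep_val (f := f) ρ hρnd (fun j' => u (k - 1 - j')) hrv y j (by omega) (k - 1 - t) h2
    have ht' : k - 1 - (k - 1 - t) = t := by omega
    have this2 : Z j (u (k - 1 - (k - 1 - t))) =
        if k - 1 - t < j then f (Z (k - 1 - t)) (u (k - 1 - (k - 1 - t)))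
        else y (u (k - 1 - (k - 1 - t))) := this
    rw [ht'] at this2
    exact this2
  have hzv : ∀ t, t < k → z (u t) = dval t := by
    intro t ht
    rw [hzZ, hZv k le_rfl t ht, if_pos (by omega)]
  have houty : ∀ a, a ∉ b → y a = x₀ a := by
    intro a ha; exact applyWord_eq_of_not_mem ha x₀
  have houtX : ∀ i, ∀ a, a ∉ b → X i a = x₀ a := by
    intro i a ha
    exact applyWord_eq_of_not_mem (fun h => ha ((List.take_sublist i b).mem h)) x₀
  have houtZ : ∀ j, ∀ a, a ∉ b → Z j a = x₀ a := by
    intro j a ha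
    show applyWord f (ρ.take j) y a = x₀ a
    have hnm : a ∉ ρ.take j := fun h => ha (by
      have := (List.take_sublist j ρ).mem h
      rwa [hρdef, List.mem_reverse] at this)
    rw [applyWord_eq_of_not_mem hnm y]
    exact houty a ha
  have houtz : ∀ a, a ∉ b → z a = x₀ a := by
    intro a ha; rw [hzZ]; exact houtZ k a ha
  -- the key directional comparison for non-root vertices
  have hS2 : ∀ s, s < k - 1 →
      (x₀ (u (pidx s)) ≤ z (u (pidx s)) → y (u s) ≤ z (u s)) ∧
      (z (u (pidx s)) ≤ x₀ (u (pidx s)) → z (u s) ≤ y (u s)) := by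
    intro s hs
    obtain ⟨hsm, hmk⟩ := Hpar s hs
    set m := pidx s with hm
    have hsk : s < k := by omega
    have hnsm : u s ≠ u m := fun h => by have := hinj s m hsk hmk h; omega
    set W₁ : Fin n → Bool := Function.update (X s) (u s) (val s) with hW₁
    have habs1 : f W₁ (u s) = val s := by
      rw [hW₁, hval]
      exact absorb hf (X s) (u s)
    set W₂ : Fin n → Bool := Function.update W₁ (u m) (z (u m)) with hW₂
    have hW₁m : W₁ (u m) = x₀ (u m) := by
      rw [hW₁, Function.update_apply, if_neg (Ne.symm hnsm)]
      rw [hXv s (by omega) m hmk, if_neg (by omega)]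
    have hagree : ∀ a, DependsOnCoord f (u s) a → W₂ a = Z (k - 1 - s) a := by
      intro a ha
      rcases Hdep s hsk a ha with h | ⟨_, h⟩ | ⟨c, hc, hpc, h⟩ | h
      · subst h
        rw [hW₂, Function.update_apply, if_neg hnsm, hW₁, Function.update_self]
        rw [hZv (k - 1 - s) (by omega) s hsk, if_neg (by omega), hyv s hsk]
      · rw [← hm] at h
        subst h
        rw [hW₂, Function.update_self]
        rw [hZv (k - 1 - s) (by omega) m hmk, if_pos (by omega), ← hzv m hmk]
      · subst h
        have hck : c < k := by omega
        have hcs : c < s := by have := (Hpar c hc).1; omega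
        have hne1 : u c ≠ u m := fun h => by have := hinj c m hck hmk h; omega
        have hne2 : u c ≠ u s := fun h => by have := hinj c s hck hsk h; omega
        rw [hW₂, Function.update_apply, if_neg hne1, hW₁, Function.update_apply, if_neg hne2]
        rw [hXv s (by omega) c hck, if_pos hcs]
        rw [hZv (k - 1 - s) (by omega) c hck, if_neg (by omega), hyv c hck]
      · have hne1 : a ≠ u m := fun he => h (he ▸ humem m hmk)
        have hne2 : a ≠ u s := fun he => h (he ▸ humem s hsk)
        rw [hW₂, Function.update_apply, if_neg hne1, hW₁, Function.update_apply, if_neg hne2]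
        rw [houtX s a h, houtZ (k - 1 - s) a h]
    have hfW₂ : f W₂ (u s) = z (u s) := by
      have h1 : f W₂ (u s) = f (Z (k - 1 - s)) (u s) := eval_eq_of_agree (u s) hagree
      rw [h1, hzv s hsk]
    constructor
    · intro hle
      have hle2 : W₁ ≤ W₂ := by
        rw [hW₂]
        apply le_update
        rw [hW₁m]; exact hle
      have := hf hle2 (u s)
      rw [habs1, hfW₂] at this
      rw [hyv s hsk]; exact this
    · intro hle
      have hle2 : W₂ ≤ W₁ := by
        rw [hW₂]
        apply update_le
        rw [hW₁m]; exact hle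
      have := hf hle2 (u s)
      rw [habs1, hfW₂] at this
      rw [hyv s hsk]; exact this
  -- main fixedness claim, per index
  have hmain : ∀ t, t < k → f z (u t) = z (u t) := by
    intro t ht
    set V : Fin n → Bool := Function.update (Z (k - 1 - t)) (u t) (z (u t)) with hV
    have habs : f V (u t) = z (u t) := by
      rw [hV, hzv t ht, hdval]
      exact absorb hf (Z (k - 1 - t)) (u t)
    set V' : Fin n → Bool :=
      fun a => if (∃ c, c < k - 1 ∧ pidx c = t ∧ a = u c) then z a else V a with hV'
    have hV'a : ∀ a, V' a = if (∃ c, c < k - 1 ∧ pidx c = t ∧ a = u c) then z a else V a :=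
      fun _ => rfl
    have hnotself : ¬ (∃ c, c < k - 1 ∧ pidx c = t ∧ u t = u c) := by
      rintro ⟨c, hc, hpc, hcu⟩
      have := hinj t c ht (by omega) hcu
      have := (Hpar c hc).1
      omega
    have hagree : ∀ a, DependsOnCoord f (u t) a → V' a = z a := by
      intro a ha
      rcases Hdep t ht a ha with h | ⟨htk, h⟩ | ⟨c, hc, hpc, h⟩ | h
      · subst h
        rw [hV'a, if_neg hnotself, hV, Function.update_self]
      · set m := pidx t with hm
        have hmk : m < k := (Hpar t htk).2
        have htm : t < m := (Hpar t htk).1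
        subst h
        have hcond : ¬ (∃ c, c < k - 1 ∧ pidx c = t ∧ u m = u c) := by
          rintro ⟨c, hc, hpc, hcu⟩
          have := hinj m c hmk (by omega) hcu
          have := (Hpar c hc).1
          omega
        rw [hV'a, if_neg hcond]
        rw [hV, Function.update_apply, if_neg (fun h => by have := hinj m t hmk ht h; omega)]
        rw [hZv (k - 1 - t) (by omega) m hmk, if_pos (by omega), ← hzv m hmk]
      · subst h
        have hcond : ∃ c', c' < k - 1 ∧ pidx c' = t ∧ u c = u c' := ⟨c, hc, hpc, rfl⟩
        rw [hV'a, if_pos hcond]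
      · have hcond : ¬ (∃ c, c < k - 1 ∧ pidx c = t ∧ a = u c) := by
          rintro ⟨c, hc, _, hcu⟩
          exact h (hcu ▸ humem c (by omega))
        rw [hV'a, if_neg hcond]
        have hne : a ≠ u t := fun he => h (he ▸ humem t ht)
        rw [hV, Function.update_apply, if_neg hne]
        rw [houtZ (k - 1 - t) a h, houtz a h]
    have hfV' : f z (u t) = f V' (u t) :=
      eval_eq_of_agree (u t) (fun a ha => (hagree a ha).symm)
    cases hzt : z (u t) with
    | true =>
      have hVle : V ≤ V' := by
        intro a
        rw [hV'a]
        by_cases hcond : ∃ c, c < k - 1 ∧ pidx c = t ∧ a = u c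
        · rw [if_pos hcond]
          obtain ⟨c, hc, hpc, ha⟩ := hcond
          subst ha
          have hck : c < k := by omega
          have hct : c < t := by have := (Hpar c hc).1; omega
          have hVa : V (u c) = y (u c) := by
            rw [hV, Function.update_apply, if_neg (fun h => by have := hinj c t hck ht h; omega)]
            rw [hZv (k - 1 - t) (by omega) c hck, if_neg (by omega)]
          rw [hVa]
          have := (hS2 c hc).1
          rw [hpc] at this
          exact this (by rw [hzt]; exact Bool.le_true _)
        · rw [if_neg hcond]
      have h1 := hf hVle (u t)
      rw [habs, hzt] at h1
      rw [hfV']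
      exact le_antisymm (Bool.le_true _) h1
    | false =>
      have hVle : V' ≤ V := by
        intro a
        rw [hV'a]
        by_cases hcond : ∃ c, c < k - 1 ∧ pidx c = t ∧ a = u c
        · rw [if_pos hcond]
          obtain ⟨c, hc, hpc, ha⟩ := hcond
          subst ha
          have hck : c < k := by omega
          have hct : c < t := by have := (Hpar c hc).1; omega
          have hVa : V (u c) = y (u c) := by
            rw [hV, Function.update_apply, if_neg (fun h => by have := hinj c t hck ht h; omega)]
            rw [hZv (k - 1 - t) (by omega) c hck, if_neg (by omega)]
          rw [hVa]
          have := (hS2 c hc).2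
          rw [hpc] at this
          exact this (by rw [hzt]; exact Bool.false_le _)
        · rw [if_neg hcond]
      have h1 := hf hVle (u t)
      rw [habs, hzt] at h1
      rw [hfV']
      exact le_antisymm h1 (Bool.false_le _)
  -- conclusion
  intro v hv
  obtain ⟨⟨t, ht⟩, hgt⟩ := List.mem_iff_get.mp hv
  rw [hu t ht] at hgt
  subst hgt
  have hfin : applyWord f (b ++ b.reverse) x₀ = z := by
    rw [applyWord_append, hz, hy, hρdef]
  rw [hfin]
  exact hmain t ht

end BN
namespace BN

variable {α : Type*} [DecidableEq α]

/-- From reflexive-transitive closure extract a nodup chain list. -/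
theorem exists_nodup_path {r : α → α → Prop} {a c : α} (h : Relation.ReflTransGen r a c) :
    ∃ l : List α, l.Nodup ∧ l.Chain' r ∧ l.head? = some a ∧ l.getLast? = some c ∧
      ∀ x ∈ l, Relation.ReflTransGen r a x ∧ Relation.ReflTransGen r x c := by
  classical
  induction h using Relation.ReflTransGen.head_induction_on with
  | refl =>
    refine ⟨[c], by simp, List.isChain_singleton _, by simp, by simp, ?_⟩
    intro x hx
    simp only [List.mem_singleton] at hx
    subst hx
    exact ⟨Relation.ReflTransGen.refl, Relation.ReflTransGen.refl⟩
  | head hab hbc ih =>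
    rename_i p q
    obtain ⟨l, hnd, hch, hhd, hlast, hmem⟩ := ih
    by_cases hp : p ∈ l
    · obtain ⟨s, t, hst⟩ := List.append_of_mem hp
      refine ⟨p :: t, ?_, ?_, by simp, ?_, ?_⟩
      · have : (p :: t).Sublist l := by
          rw [hst]; exact (List.sublist_append_right s (p :: t))
        exact this.nodup hnd
      · exact hch.suffix ⟨s, hst.symm⟩
      · have h1 : l.getLast? = (p :: t).getLast? := by
          rw [hst, List.getLast?_append]
          cases h2 : (p :: t).getLast? with
          | none => simp at h2
          | some w => simp
        rw [← h1, hlast]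
      · intro x hx
        have hxl : x ∈ l := by rw [hst]; exact List.mem_append_right s hx
        refine ⟨?_, (hmem x hxl).2⟩
        exact Relation.ReflTransGen.head hab (hmem x hxl).1
    · refine ⟨p :: l, ?_, ?_, by simp, ?_, ?_⟩
      · exact List.Nodup.cons hp hnd
      · cases l with
        | nil => simp at hhd
        | cons b' l' =>
          show List.IsChain _ _; rw [List.isChain_cons_cons]
          have : b' = q := by simpa using hhd
          subst this
          exact ⟨hab, hch⟩
      · cases l with
        | nil => simp at hhd
        | cons b' l' =>
          rw [show p :: b' :: l' = [p] ++ (b' :: l') from rfl, List.getLast?_append, hlast]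
          rfl
      · intro x hx
        rcases List.mem_cons.mp hx with h1 | h1
        · subst h1
          exact ⟨Relation.ReflTransGen.refl, Relation.ReflTransGen.head hab hbc⟩
        · exact ⟨Relation.ReflTransGen.head hab (hmem x h1).1, (hmem x h1).2⟩

theorem mem_take_iff_nodup {l : List α} (hnd : l.Nodup) {t s : ℕ} (hs : s < l.length) :
    l.get ⟨s, hs⟩ ∈ l.take t ↔ s < t := by
  constructor
  · intro hmem
    obtain ⟨⟨j, hj⟩, hget⟩ := List.mem_iff_get.mp hmem
    have hjl : j < l.length := lt_of_lt_of_le hj (by simp)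
    have hjt : j < t := lt_of_lt_of_le hj (by simp [List.length_take])
    have : (l.take t).get ⟨j, hj⟩ = l.get ⟨j, hjl⟩ := by
      simp [List.getElem_take]
    rw [this] at hget
    have := (hnd.get_inj_iff).mp hget
    have : j = s := Fin.mk.inj_iff.mp this
    omega
  · intro hst
    have hmem : l.get ⟨s, hs⟩ = (l.take t).get ⟨s, by simp [List.length_take]; omega⟩ := by
      simp [List.getElem_take]
    rw [hmem]
    exact List.get_mem _ _

theorem rtg_symm {r : α → α → Prop} (hsym : ∀ p q, r p q → r q p) {a b : α}
    (h : Relation.ReflTransGen r a b) : Relation.ReflTransGen r b a := by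
  induction h with
  | refl => exact Relation.ReflTransGen.refl
  | tail _ hbc ih => exact Relation.ReflTransGen.head (hsym _ _ hbc) ih

theorem rtg_cross {r : α → α → Prop} {S : α → Prop} {a b : α}
    (h : Relation.ReflTransGen r a b) (ha : S a) (hb : ¬ S b) :
    ∃ x y, S x ∧ ¬ S y ∧ r x y := by
  induction h using Relation.ReflTransGen.head_induction_on with
  | refl => exact absurd ha hb
  | head hab hbc ih =>
    rename_i p q
    by_cases hq : S q
    · exact ih hq
    · exact ⟨p, q, ha, hq, hab⟩

end BN
namespace BN

variable {α : Type*} [DecidableEq α]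

theorem chain'_head_rtg {A : α → α → Prop} {l : List α} (hch : l.Chain' A) {a : α}
    (hhd : l.head? = some a) : ∀ s (hs : s < l.length), Relation.ReflTransGen A a (l.get ⟨s, hs⟩) := by
  intro s
  induction s with
  | zero =>
    intro hs
    cases l with
    | nil => simp at hs
    | cons b l' =>
      have : b = a := by simpa using hhd
      subst this
      exact Relation.ReflTransGen.refl
  | succ s ih =>
    intro hs
    have hs' : s < l.length := by omega
    have hedge : A (l.get ⟨s, hs'⟩) (l.get ⟨s + 1, hs⟩) := by
      have := List.isChain_iff_getElem.mp hch s (by omega)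
      exact this
    exact Relation.ReflTransGen.tail (ih hs') hedge

/-- Grow a spanning "attachment order" of `B` starting from `v₀`. -/
theorem grow_tree {A : α → α → Prop} {B : Finset α} {v₀ : α} (hv₀ : v₀ ∈ B)
    (hAmem : ∀ p q, A p q → p ∈ B ∧ q ∈ B ∧ p ≠ q)
    (hconn : ∀ p ∈ B, Relation.ReflTransGen A v₀ p) :
    ∃ c : List α, c ≠ [] ∧ c.Nodup ∧ c.toFinset = B ∧ c.head? = some v₀ ∧
      ∀ t (ht : t < c.length), 0 < t →
        ∃ s, ∃ hs : s < c.length, s < t ∧ A (c.get ⟨s, hs⟩) (c.get ⟨t, ht⟩) := by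
  classical
  -- auxiliary growth by strong induction on the number of missing vertices
  suffices haux : ∀ (m : ℕ) (c : List α), (B \ c.toFinset).card ≤ m →
      c ≠ [] → c.Nodup → c.head? = some v₀ → (∀ x ∈ c, x ∈ B) →
      (∀ t (ht : t < c.length), 0 < t →
        ∃ s, ∃ hs : s < c.length, s < t ∧ A (c.get ⟨s, hs⟩) (c.get ⟨t, ht⟩)) →
      ∃ c' : List α, c' ≠ [] ∧ c'.Nodup ∧ c'.toFinset = B ∧ c'.head? = some v₀ ∧
        ∀ t (ht : t < c'.length), 0 < t →
          ∃ s, ∃ hs : s < c'.length, s < t ∧ A (c'.get ⟨s, hs⟩) (c'.get ⟨t, ht⟩) by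
    refine haux (B \ ([v₀] : List α).toFinset).card [v₀] le_rfl (by simp) (by simp) (by simp) ?_ ?_
    · intro x hx; simp at hx; subst hx; exact hv₀
    · intro t ht h0; simp at ht; omega
  intro m
  induction m with
  | zero =>
    intro c hcard hne hnd hhd hmem hat
    have hsub : B ⊆ c.toFinset := by
      intro x hx
      by_contra hxc
      have : x ∈ B \ c.toFinset := Finset.mem_sdiff.mpr ⟨hx, hxc⟩
      have := Finset.card_pos.mpr ⟨x, this⟩
      omega
    have heq : c.toFinset = B := by
      apply Finset.Subset.antisymm _ hsub
      intro x hx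
      simp only [List.mem_toFinset] at hx
      exact hmem x hx
    exact ⟨c, hne, hnd, heq, hhd, hat⟩
  | succ m ih =>
    intro c hcard hne hnd hhd hmem hat
    by_cases hfull : B ⊆ c.toFinset
    · have heq : c.toFinset = B := by
        apply Finset.Subset.antisymm _ hfull
        intro x hx
        simp only [List.mem_toFinset] at hx
        exact hmem x hx
      exact ⟨c, hne, hnd, heq, hhd, hat⟩
    · obtain ⟨w, hwB, hwc⟩ := Finset.not_subset.mp hfull
      rw [List.mem_toFinset] at hwc
      have hv₀c : v₀ ∈ c := by
        cases c with
        | nil => exact absurd rfl hne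
        | cons b l => have : b = v₀ := by simpa using hhd
                      simp [this]
      obtain ⟨x, y, hxc, hyc, hxy⟩ := rtg_cross (hconn w hwB) hv₀c hwc
      have hyB : y ∈ B := (hAmem x y hxy).2.1
      set c' := c ++ [y] with hc'
      have hlen : c'.length = c.length + 1 := by simp [hc']
      have hgetold : ∀ t (ht : t < c.length), c'.get ⟨t, by omega⟩ = c.get ⟨t, ht⟩ := by
        intro t ht
        simp only [hc', List.get_eq_getElem]
        exact List.getElem_append_left ht
      have hgetnew : c'.get ⟨c.length, by omega⟩ = y := by
        simp only [hc', List.get_eq_getElem]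
        exact List.getElem_concat_length rfl _
      have hnd' : c'.Nodup := by
        rw [hc']
        refine List.Nodup.append hnd (by simp) ?_
        intro a ha hb
        simp only [List.mem_singleton] at hb
        subst hb
        exact hyc ha
      have hhd' : c'.head? = some v₀ := by
        rw [hc']
        cases c with
        | nil => exact absurd rfl hne
        | cons b l => simpa using hhd
      have hmem' : ∀ a ∈ c', a ∈ B := by
        intro a ha
        rcases List.mem_append.mp ha with h | h
        · exact hmem a h
        · simp only [List.mem_singleton] at h; subst h; exact hyB
      have hat' : ∀ t (ht : t < c'.length), 0 < t →
          ∃ s, ∃ hs : s < c'.length, s < t ∧ A (c'.get ⟨s, hs⟩) (c'.get ⟨t, ht⟩) := by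
        intro t ht h0
        by_cases htc : t < c.length
        · obtain ⟨s, hs, hst, hAe⟩ := hat t htc h0
          refine ⟨s, by omega, hst, ?_⟩
          rw [hgetold s hs, hgetold t htc]
          exact hAe
        · have hteq : t = c.length := by omega
          obtain ⟨⟨s, hs⟩, hgs⟩ := List.mem_iff_get.mp hxc
          refine ⟨s, by omega, by omega, ?_⟩
          subst hteq
          rw [hgetnew, hgetold s hs, hgs]
          exact hxy
      have hcard' : (B \ c'.toFinset).card ≤ m := by
        have h1 : c'.toFinset = insert y c.toFinset := by
          simp [hc']
        have h2 : B \ c'.toFinset = (B \ c.toFinset).erase y := by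
          rw [h1]
          ext a
          simp only [Finset.mem_sdiff, Finset.mem_insert, Finset.mem_erase, not_or]
          tauto
        have h3 : y ∈ B \ c.toFinset := Finset.mem_sdiff.mpr ⟨hyB, by simpa using hyc⟩
        rw [h2]
        have := Finset.card_erase_of_mem h3
        omega
      exact ih c' hcard' (by simp [hc']) hnd' hhd' hmem' hat'

end BN
namespace BN

variable {α : Type*} [DecidableEq α]

theorem parent_unique {A : α → α → Prop} (hsym : ∀ p q, A p q → A q p)
    (hnc : ∀ l : List α, l.Nodup → l.Chain' A → 3 ≤ l.length →
      (∀ a b, l.head? = some a → l.getLast? = some b → A b a) → False)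
    {c : List α} (hnd : c.Nodup)
    (hat : ∀ t (ht : t < c.length), 0 < t →
      ∃ s, ∃ hs : s < c.length, s < t ∧ A (c.get ⟨s, hs⟩) (c.get ⟨t, ht⟩)) :
    ∀ t (ht : t < c.length) s₁ s₂ (hs₁ : s₁ < c.length) (hs₂ : s₂ < c.length),
      s₁ < t → s₂ < t → A (c.get ⟨s₁, hs₁⟩) (c.get ⟨t, ht⟩) →
      A (c.get ⟨s₂, hs₂⟩) (c.get ⟨t, ht⟩) → s₁ = s₂ := by
  classical
  intro t ht s₁ s₂ hs₁ hs₂ hst₁ hst₂ hA₁ hA₂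
  by_contra hne
  have h0 : 0 < c.length := by omega
  set A' : α → α → Prop := fun p q => A p q ∧ p ∈ c.take t ∧ q ∈ c.take t with hA'
  have hsym' : ∀ p q, A' p q → A' q p := by
    rintro p q ⟨h1, h2, h3⟩
    exact ⟨hsym p q h1, h3, h2⟩
  have hconn : ∀ s (hs : s < c.length), s < t →
      Relation.ReflTransGen A' (c.get ⟨0, h0⟩) (c.get ⟨s, hs⟩) := by
    intro s
    induction s using Nat.strong_induction_on with
    | _ s ihs =>
      intro hs hstt
      rcases Nat.eq_zero_or_pos s with h | h
      · subst h
        exact Relation.ReflTransGen.refl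
      · obtain ⟨s', hs', hlt, hAe⟩ := hat s hs h
        refine Relation.ReflTransGen.tail (ihs s' hlt hs' (by omega)) ?_
        refine ⟨hAe, ?_, ?_⟩
        · exact (mem_take_iff_nodup hnd hs').mpr (by omega)
        · exact (mem_take_iff_nodup hnd hs).mpr hstt
  have hpath : Relation.ReflTransGen A' (c.get ⟨s₁, hs₁⟩) (c.get ⟨s₂, hs₂⟩) :=
    Relation.ReflTransGen.trans (rtg_symm hsym' (hconn s₁ hs₁ hst₁)) (hconn s₂ hs₂ hst₂)
  obtain ⟨l, hlnd, hlch, hlhd, hllast, hlmem⟩ := exists_nodup_path hpath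
  have hlne : l ≠ [] := by
    intro h; rw [h] at hlhd; simp at hlhd
  have hmemtake : ∀ x ∈ l, x ∈ c.take t := by
    intro x hx
    rcases (Relation.ReflTransGen.cases_tail (hlmem x hx).1) with h | ⟨b, _, hbx⟩
    · rw [h]
      exact (mem_take_iff_nodup hnd hs₁).mpr hst₁
    · exact hbx.2.2
  have hne' : c.get ⟨s₁, hs₁⟩ ≠ c.get ⟨s₂, hs₂⟩ := by
    intro h
    exact hne (Fin.mk.inj_iff.mp ((hnd.get_inj_iff).mp h))
  have hllen : 2 ≤ l.length := by
    rcases l with _ | ⟨a, _ | ⟨b, l'⟩⟩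
    · simp at hlhd
    · exfalso
      rename_i a
      apply hne'
      have h1 : a = c.get ⟨s₁, hs₁⟩ := by simpa using hlhd
      have h2 : a = c.get ⟨s₂, hs₂⟩ := by simpa using hllast
      rw [← h1, ← h2]
    · simp only [List.length_cons]
      omega
  have hgt : c.get ⟨t, ht⟩ ∉ c.take t := by
    intro h
    have := (mem_take_iff_nodup hnd ht).mp h
    omega
  set L := l ++ [c.get ⟨t, ht⟩] with hL
  apply hnc L
  · rw [hL]
    refine List.Nodup.append hlnd (by simp) ?_
    intro a ha hb
    simp only [List.mem_singleton] at hb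
    subst hb
    exact hgt (hmemtake _ ha)
  · rw [hL]; show List.IsChain _ _; rw [List.isChain_append]
    refine ⟨hlch.imp (fun a b h => h.1), List.isChain_singleton _, ?_⟩
    intro x hx y hy
    simp only [List.head?_cons, Option.mem_def, Option.some.injEq] at hy
    rw [hllast] at hx
    simp only [Option.mem_def, Option.some.injEq] at hx
    subst hx; subst hy
    exact hA₂
  · rw [hL]
    simp only [List.length_append, List.length_singleton]
    omega
  · intro a b hhd hlast
    rw [hL] at hhd hlast
    have ha : a = c.get ⟨s₁, hs₁⟩ := by
      cases l with
      | nil => exact absurd rfl hlne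
      | cons p l' =>
        simp only [List.cons_append, List.head?_cons, Option.some.injEq] at hhd
        have : p = c.get ⟨s₁, hs₁⟩ := by simpa using hlhd
        rw [← hhd, this]
    have hb : b = c.get ⟨t, ht⟩ := by
      rw [List.getLast?_append] at hlast
      simp at hlast
      exact hlast.symm
    subst ha; subst hb
    exact hsym _ _ hA₁

end BN
namespace BN

theorem exists_source_block {n : ℕ} (E : Fin n → Fin n → Prop) (K : Finset (Fin n))
    (hne : K.Nonempty)
    (hK : ∀ l : List (Fin n), IsDiCycle E (↑K : Set (Fin n)) l → l.length ≤ 2) :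
    ∃ (c : List (Fin n)) (v : ℕ → Fin n) (pp : ℕ → ℕ),
      c ≠ [] ∧ c.Nodup ∧ (∀ x ∈ c, x ∈ K) ∧
      (∀ q (hq : q < c.length), c.get ⟨q, hq⟩ = v q) ∧
      (∀ q, 0 < q → q < c.length → pp q < q) ∧
      (∀ q, q < c.length → ∀ a, E a (v q) →
        a = v q ∨ (0 < q ∧ a = v (pp q)) ∨
        (∃ s, 0 < s ∧ s < c.length ∧ pp s = q ∧ a = v s) ∨ a ∉ K) := by
  classical
  set r : Fin n → Fin n → Prop := fun p q => E p q ∧ p ∈ K ∧ q ∈ K with hrdef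
  have hrtgK : ∀ p q, Relation.ReflTransGen r p q → p ∈ K → q ∈ K := by
    intro p q h hp
    rcases h.cases_tail with h1 | ⟨b, _, hbq⟩
    · rw [h1]; exact hp
    · exact hbq.2.2
  obtain ⟨v₀, hv₀K, hv₀min⟩ :=
    K.exists_min_image (fun u => (K.filter (fun w => Relation.ReflTransGen r w u)).card) hne
  have hmin : ∀ u ∈ K, Relation.ReflTransGen r u v₀ → Relation.ReflTransGen r v₀ u := by
    intro u huK hu
    have hsub : K.filter (fun w => Relation.ReflTransGen r w u) ⊆
        K.filter (fun w => Relation.ReflTransGen r w v₀) := by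
      intro w hw
      simp only [Finset.mem_filter] at hw ⊢
      exact ⟨hw.1, hw.2.trans hu⟩
    have hcard := hv₀min u huK
    have heq := Finset.eq_of_subset_of_card_le hsub hcard
    have hv₀mem : v₀ ∈ K.filter (fun w => Relation.ReflTransGen r w v₀) := by
      simp only [Finset.mem_filter]
      exact ⟨hv₀K, Relation.ReflTransGen.refl⟩
    rw [← heq] at hv₀mem
    exact (Finset.mem_filter.mp hv₀mem).2
  set B := K.filter (fun p => Relation.ReflTransGen r p v₀ ∧ Relation.ReflTransGen r v₀ p)
    with hBdef
  have hv₀B : v₀ ∈ B := by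
    simp only [hBdef, Finset.mem_filter]
    exact ⟨hv₀K, Relation.ReflTransGen.refl, Relation.ReflTransGen.refl⟩
  have hBK : ∀ p ∈ B, p ∈ K := fun p hp => (Finset.mem_filter.mp hp).1
  have hBv : ∀ p ∈ B, Relation.ReflTransGen r p v₀ ∧ Relation.ReflTransGen r v₀ p :=
    fun p hp => (Finset.mem_filter.mp hp).2
  have hBin : ∀ p q, q ∈ B → r p q → p ∈ B := by
    intro p q hqB hrpq
    have hpK : p ∈ K := hrpq.2.1
    have h1 : Relation.ReflTransGen r p v₀ := Relation.ReflTransGen.head hrpq (hBv q hqB).1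
    simp only [hBdef, Finset.mem_filter]
    exact ⟨hpK, h1, hmin p hpK h1⟩
  have hdigon : ∀ p q, p ∈ B → q ∈ B → p ≠ q → r p q → r q p := by
    intro p q hpB hqB hpq hrpq
    have hq2p : Relation.ReflTransGen r q p := ((hBv q hqB).1).trans (hBv p hpB).2
    obtain ⟨l, hlnd, hlch, hlhd, hllast, hlmem⟩ := exists_nodup_path hq2p
    have hlK : ∀ x ∈ l, x ∈ K := by
      intro x hx
      exact hrtgK q x (hlmem x hx).1 (hBK q hqB)
    have hcyc : IsDiCycle E (↑K : Set (Fin n)) l := by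
      refine ⟨?_, hlnd, ?_, hlch.imp (fun a b h => h.1), ?_⟩
      · intro h; rw [h] at hlhd; simp at hlhd
      · intro x hx; exact hlK x hx
      · intro a b hhd hlast
        have ha : a = q := by rw [hlhd] at hhd; simpa using hhd.symm
        have hb : b = p := by rw [hllast] at hlast; simpa using hlast.symm
        subst ha; subst hb
        exact hrpq.1
    have hlen := hK l hcyc
    rcases l with _ | ⟨x, _ | ⟨y, _ | ⟨w, l'⟩⟩⟩
    · simp at hlhd
    · exfalso
      apply hpq
      have h1 : x = q := by simpa using hlhd
      have h2 : x = p := by simpa using hllast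
      rw [← h2, h1]
    · have h1 : x = q := by simpa using hlhd
      have h2 : y = p := by simpa using hllast
      subst h1; subst h2
      exact (List.isChain_cons_cons.mp hlch).1
    · simp at hlen
  set A : Fin n → Fin n → Prop :=
    fun p q => r p q ∧ r q p ∧ p ≠ q ∧ p ∈ B ∧ q ∈ B with hAdef
  have hAsym : ∀ p q, A p q → A q p := by
    rintro p q ⟨h1, h2, h3, h4, h5⟩
    exact ⟨h2, h1, Ne.symm h3, h5, h4⟩
  have hAmem : ∀ p q, A p q → p ∈ B ∧ q ∈ B ∧ p ≠ q := by
    rintro p q ⟨_, _, h3, h4, h5⟩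
    exact ⟨h4, h5, h3⟩
  have hconn : ∀ p ∈ B, Relation.ReflTransGen A v₀ p := by
    intro p hpB
    obtain ⟨l, hlnd, hlch, hlhd, hllast, hlmem⟩ := exists_nodup_path (hBv p hpB).2
    have hlB : ∀ x ∈ l, x ∈ B := by
      intro x hx
      have h1 := (hlmem x hx).1
      have h2 := (hlmem x hx).2
      have hxK : x ∈ K := hrtgK v₀ x h1 hv₀K
      simp only [hBdef, Finset.mem_filter]
      exact ⟨hxK, h2.trans (hBv p hpB).1, h1⟩
    have hchA : l.Chain' A := by
      show List.IsChain _ _; rw [List.isChain_iff_getElem]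
      intro i hi
      have hrr := List.isChain_iff_getElem.mp hlch i hi
      have hii : i < l.length := by omega
      have hii1 : i + 1 < l.length := by omega
      have hne' : l.get ⟨i, hii⟩ ≠ l.get ⟨i + 1, hii1⟩ := by
        intro h
        have := Fin.mk.inj_iff.mp ((hlnd.get_inj_iff).mp h)
        omega
      have hmem1 : l.get ⟨i, hii⟩ ∈ B := hlB _ (List.get_mem _ _)
      have hmem2 : l.get ⟨i + 1, hii1⟩ ∈ B := hlB _ (List.get_mem _ _)
      exact ⟨hrr, hdigon _ _ hmem1 hmem2 hne' hrr, hne', hmem1, hmem2⟩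
    have hlne : l ≠ [] := by intro h; rw [h] at hlhd; simp at hlhd
    have hlast' : l.get ⟨l.length - 1, by
        have := List.length_pos_iff.mpr hlne; omega⟩ = p := by
      have h1 := List.getLast?_eq_getLast hlne
      rw [h1] at hllast
      have h2 : l.getLast hlne = p := by simpa using hllast
      rw [← h2]
      exact (List.getLast_eq_getElem hlne).symm
    have := chain'_head_rtg hchA hlhd (l.length - 1)
      (by have := List.length_pos_iff.mpr hlne; omega)
    rwa [hlast'] at this
  obtain ⟨c, hcne, hcnd, hcB, hchd, hcat⟩ := grow_tree hv₀B hAmem hconn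
  have hnc : ∀ l : List (Fin n), l.Nodup → l.Chain' A → 3 ≤ l.length →
      (∀ a b, l.head? = some a → l.getLast? = some b → A b a) → False := by
    intro l hnd hch hlen hclose
    have hlne : l ≠ [] := by intro h; rw [h] at hlen; simp at hlen
    have hcyc : IsDiCycle E (↑K : Set (Fin n)) l := by
      refine ⟨hlne, hnd, ?_, hch.imp (fun a b h => h.1.1), ?_⟩
      · intro x hx
        obtain ⟨⟨i, hi⟩, hgi⟩ := List.mem_iff_get.mp hx
        rcases Nat.eq_zero_or_pos i with h0 | h0
        · subst h0
          have hhd : l.head? = some (l.get ⟨0, hi⟩) := by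
            cases l with
            | nil => exact absurd rfl hlne
            | cons u l' => simp
          have := hclose _ _ hhd (List.getLast?_eq_getLast hlne)
          rw [hgi] at this
          simpa using this.1.2.2
        · have hedge := List.isChain_iff_getElem.mp hch (i - 1) (by omega)
          have : l.get ⟨i - 1 + 1, by omega⟩ = x := by
            have : i - 1 + 1 = i := by omega
            simp_rw [this]
            exact hgi
          rw [show l[i - 1 + 1] = x from this] at hedge
          simpa using hedge.1.2.2
      · intro a b hhd hlast
        exact (hclose a b hhd hlast).1.1
    have := hK l hcyc
    omega
  have huniq := parent_unique hAsym hnc hcnd hcat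
  -- definitions of v and pp
  set v : ℕ → Fin n := fun q => if hq : q < c.length then c.get ⟨q, hq⟩ else v₀ with hvdef
  set pp : ℕ → ℕ := fun q =>
    if h : 0 < q ∧ q < c.length then Classical.choose (hcat q h.2 h.1) else 0 with hppdef
  have hveval : ∀ q (hq : q < c.length), v q = c.get ⟨q, hq⟩ := by
    intro q hq
    show (if hq' : q < c.length then c.get ⟨q, hq'⟩ else v₀) = c.get ⟨q, hq⟩
    rw [dif_pos hq]
  have hpp_spec : ∀ q (h0 : 0 < q) (hq : q < c.length),
      ∃ hs : pp q < c.length, pp q < q ∧ A (c.get ⟨pp q, hs⟩) (c.get ⟨q, hq⟩) := by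
    intro q h0 hq
    have heval : pp q = Classical.choose (hcat q hq h0) := by
      show (if h : 0 < q ∧ q < c.length then Classical.choose (hcat q h.2 h.1) else 0)
        = Classical.choose (hcat q hq h0)
      rw [dif_pos ⟨h0, hq⟩]
    obtain ⟨hs, h1, h2⟩ := Classical.choose_spec (hcat q hq h0)
    rw [heval]
    exact ⟨hs, h1, h2⟩
  have hcmem : ∀ x ∈ c, x ∈ B := by
    intro x hx
    rw [← hcB]
    exact List.mem_toFinset.mpr hx
  refine ⟨c, v, pp, hcne, hcnd, fun x hx => hBK x (hcmem x hx),
    fun q hq => (hveval q hq).symm, ?_, ?_⟩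
  · intro q h0 hq
    exact (hpp_spec q h0 hq).2.1
  · intro q hq a hEa
    by_cases haK : a ∈ K
    swap
    · right; right; right; exact haK
    by_cases hav : a = v q
    · left; exact hav
    have hvqc : v q ∈ c := by
      rw [hveval q hq]
      exact List.get_mem _ _
    have hvqB : v q ∈ B := hcmem _ hvqc
    have hra : r a (v q) := ⟨hEa, haK, hBK _ hvqB⟩
    have haB : a ∈ B := hBin a (v q) hvqB hra
    have hAa : A a (v q) := ⟨hra, hdigon a (v q) haB hvqB hav hra, hav, haB, hvqB⟩
    have hac : a ∈ c := by
      rw [← List.mem_toFinset, hcB]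
      exact haB
    obtain ⟨⟨s, hs⟩, hgs⟩ := List.mem_iff_get.mp hac
    have hAa' : A (c.get ⟨s, hs⟩) (c.get ⟨q, hq⟩) := by
      rw [hgs, ← hveval q hq]
      exact hAa
    rcases lt_trichotomy s q with h | h | h
    · -- a is the parent of q
      have h0q : 0 < q := by omega
      obtain ⟨hppl, hppq, hppA⟩ := hpp_spec q h0q hq
      have heqs : s = pp q := huniq q hq s (pp q) hs hppl h hppq hAa' hppA
      right; left
      refine ⟨h0q, ?_⟩
      rw [hveval (pp q) hppl, ← hgs]
      congr 1
      exact Fin.ext (by simp [heqs])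
    · -- a = v q, contradiction
      exfalso
      apply hav
      rw [hveval q hq, ← hgs]
      congr 1
      exact Fin.ext (by simp [h])
    · -- q is the parent of s : child case
      have h0s : 0 < s := by omega
      obtain ⟨hppl, hpps, hppA⟩ := hpp_spec s h0s hs
      have hAa'' : A (c.get ⟨q, hq⟩) (c.get ⟨s, hs⟩) := hAsym _ _ hAa'
      have heqs : q = pp s := huniq s hs q (pp s) hq hppl h hpps hAa'' hppA
      right; right; left
      exact ⟨s, h0s, hs, heqs.symm, by rw [hveval s hs, ← hgs]⟩

end BN
namespace BN

variable {n : ℕ} {f : (Fin n → Bool) → (Fin n → Bool)}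

/-- Root-first form of the block lemma: word `c.reverse ++ c`. -/
theorem block_fix' (hf : Monotone f) (c : List (Fin n)) (hnd : c.Nodup)
    (v : ℕ → Fin n) (hv : ∀ q (hq : q < c.length), c.get ⟨q, hq⟩ = v q)
    (pp : ℕ → ℕ) (Hp : ∀ q, 0 < q → q < c.length → pp q < q)
    (Hd : ∀ q, q < c.length → ∀ a, DependsOnCoord f (v q) a →
      a = v q ∨ (0 < q ∧ a = v (pp q)) ∨
      (∃ s, 0 < s ∧ s < c.length ∧ pp s = q ∧ a = v s) ∨ a ∉ c)
    (x₀ : Fin n → Bool) :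
    ∀ w ∈ c, f (applyWord f (c.reverse ++ c) x₀) w = applyWord f (c.reverse ++ c) x₀ w := by
  set k := c.length with hk
  set b := c.reverse with hb
  have hbk : b.length = k := by simp [hb, hk]
  have hbnd : b.Nodup := by simp [hb]; exact hnd
  set u : ℕ → Fin n := fun t => v (k - 1 - t) with hu
  have hub : ∀ t (ht : t < b.length), b.get ⟨t, ht⟩ = u t := by
    intro t ht
    have ht' : t < k := by omega
    have h2 : k - 1 - t < k := by omega
    have : c.reverse.get ⟨c.length - 1 - (k - 1 - t), by simp [hk]; omega⟩ = c.get ⟨k - 1 - t, h2⟩ := by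
      simp only [List.get_eq_getElem, List.getElem_reverse]; congr 1; omega
    have heq : (⟨c.length - 1 - (k - 1 - t), by simp [hk]; omega⟩ : Fin c.reverse.length)
        = ⟨t, by simpa [hb] using ht⟩ := by
      apply Fin.ext; simp [hk]; omega
    rw [hu]
    show b.get ⟨t, ht⟩ = v (k - 1 - t)
    rw [← hv (k - 1 - t) h2, ← this]
    exact congrArg _ heq.symm
  set pidx : ℕ → ℕ := fun t => k - 1 - pp (k - 1 - t) with hpidx
  have hrev : b.reverse = c := by simp [hb]
  have hword : b ++ b.reverse = c.reverse ++ c := by rw [hrev]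
  have hk0 : ∀ w ∈ c, 0 < k := by
    intro w hw
    have : c ≠ [] := by intro h; rw [h] at hw; simp at hw
    have := List.length_pos_iff.mpr this
    omega
  intro w hw
  have h0 : 0 < k := hk0 w hw
  have := block_fix hf b hbnd u hub pidx ?hpar ?hdep x₀ w (by rw [hb, List.mem_reverse]; exact hw)
  · rw [hword] at this
    exact this
  case hpar =>
    intro t ht
    have htk : t < k - 1 := by omega
    set q := k - 1 - t with hq
    have hq0 : 0 < q := by omega
    have hqk : q < k := by omega
    have := Hp q hq0 hqk
    constructor
    · show t < k - 1 - pp q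
      omega
    · show k - 1 - pp q < b.length
      omega
  case hdep =>
    intro t ht a ha
    have htk : t < k := by rwa [hbk] at ht
    set q := k - 1 - t with hqdef
    have hqk : q < k := by omega
    have huts : u t = v q := rfl
    rcases Hd q hqk a (by rwa [huts] at ha) with h | ⟨h0, h⟩ | ⟨s, hs0, hsk, hps, h⟩ | h
    · left; rw [huts]; exact h
    · right; left
      refine ⟨by omega, ?_⟩
      rw [h]
      show v (pp q) = u (k - 1 - pp (k - 1 - t))
      rw [hu]
      congr 1
      have := Hp q h0 hqk
      rw [← hqdef]
      omega
    · right; right; left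
      refine ⟨k - 1 - s, by omega, ?_, ?_⟩
      · show k - 1 - pp (k - 1 - (k - 1 - s)) = t
        have hss : k - 1 - (k - 1 - s) = s := by omega
        rw [hss, hps]
        omega
      · rw [h]
        show v s = u (k - 1 - s)
        rw [hu]
        congr 1
        omega
    · right; right; right
      rw [hb, List.mem_reverse]
      exact h

/-- Fixing word for the circumference ≤ 2 part. -/
theorem base_word (E : Fin n → Fin n → Prop) (K : Finset (Fin n))
    (hK : ∀ l : List (Fin n), IsDiCycle E (↑K : Set (Fin n)) l → l.length ≤ 2) :
    ∃ w : List (Fin n), w.length ≤ 2 * K.card ∧ (∀ a ∈ w, a ∈ K) ∧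
      ∀ f : (Fin n → Bool) → (Fin n → Bool), Monotone f → InteractionSubgraph f E →
        ∀ x, FixedOn f K (applyWord f w x) := by
  classical
  suffices H : ∀ (m : ℕ) (K : Finset (Fin n)), K.card ≤ m →
      (∀ l : List (Fin n), IsDiCycle E (↑K : Set (Fin n)) l → l.length ≤ 2) →
      ∃ w : List (Fin n), w.length ≤ 2 * K.card ∧ (∀ a ∈ w, a ∈ K) ∧
      ∀ f : (Fin n → Bool) → (Fin n → Bool), Monotone f → InteractionSubgraph f E →
        ∀ x, FixedOn f K (applyWord f w x) from H K.card K le_rfl hK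
  intro m
  induction m with
  | zero =>
    intro K hcard hK
    have : K = ∅ := Finset.card_eq_zero.mp (by omega)
    subst this
    exact ⟨[], by simp, by simp, fun f _ _ x u hu => by simp at hu⟩
  | succ m ih =>
    intro K hcard hK
    rcases Finset.eq_empty_or_nonempty K with hKe | hne
    · subst hKe
      exact ⟨[], by simp, by simp, fun f _ _ x u hu => by simp at hu⟩
    obtain ⟨c, v, pp, hcne, hcnd, hcK, hv, hpp, hdep⟩ := exists_source_block E K hne hK
    set K' := K \ c.toFinset with hK'def
    have hsubK : c.toFinset ⊆ K := by
      intro a ha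
      exact hcK a (List.mem_toFinset.mp ha)
    have hcard' : K'.card = K.card - c.length := by
      rw [hK'def, Finset.card_sdiff_of_subset hsubK, List.toFinset_card_of_nodup hcnd]
    have hclen : 0 < c.length := List.length_pos_iff.mpr hcne
    have hcK' : K'.card ≤ m := by
      have := Finset.card_le_card hsubK
      rw [List.toFinset_card_of_nodup hcnd] at this
      omega
    have hK'cyc : ∀ l : List (Fin n), IsDiCycle E (↑K' : Set (Fin n)) l → l.length ≤ 2 := by
      intro l hl
      apply hK
      obtain ⟨h1, h2, h3, h4, h5⟩ := hl
      refine ⟨h1, h2, ?_, h4, h5⟩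
      intro x hx
      have := h3 x hx
      simp only [hK'def, Finset.coe_sdiff, Set.mem_diff] at this
      exact this.1
    obtain ⟨w', hw'len, hw'mem, hw'fix⟩ := ih K' hcK' hK'cyc
    refine ⟨(c.reverse ++ c) ++ w', ?_, ?_, ?_⟩
    · simp only [List.length_append, List.length_reverse]
      have hle : c.length ≤ K.card := by
        have := Finset.card_le_card hsubK
        rwa [List.toFinset_card_of_nodup hcnd] at this
      omega
    · intro a ha
      rcases List.mem_append.mp ha with h | h
      · rcases List.mem_append.mp h with h1 | h1
        · exact hcK a (List.mem_reverse.mp h1)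
        · exact hcK a h1
      · have := hw'mem a h
        rw [hK'def, Finset.mem_sdiff] at this
        exact this.1
    · intro f hf hIG x
      rw [applyWord_append]
      set z := applyWord f (c.reverse ++ c) x with hz
      have hblock : ∀ u ∈ c, f z u = z u := by
        apply block_fix' hf c hcnd v hv pp hpp _ x
        intro q hq a ha
        rcases hdep q hq a (hIG (v q) a ha) with h | h | h | h
        · left; exact h
        · right; left; exact h
        · right; right; left; exact h
        · right; right; right
          intro hac
          exact h (hcK a hac)
      intro u huK
      by_cases hu : u ∈ K'
      · exact hw'fix f hf hIG z u hu
      · have huc : u ∈ c := by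
          rw [hK'def, Finset.mem_sdiff] at hu
          push_neg at hu
          exact List.mem_toFinset.mp (hu huK)
        have hunotK' : ∀ a, a ∉ K' → applyWord f w' z a = z a := by
          intro a ha
          apply applyWord_eq_of_not_mem
          intro hmem
          exact ha (hw'mem a hmem)
        obtain ⟨⟨q, hq⟩, hgq⟩ := List.mem_iff_get.mp huc
        rw [hv q hq] at hgq
        have hdepK' : ∀ a, DependsOnCoord f u a → a ∉ K' := by
          intro a ha
          rw [← hgq] at ha
          rcases hdep q hq a (hIG (v q) a ha) with h | ⟨h0q, h⟩ | ⟨s, _, hsk, _, h⟩ | h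
          · subst h
            rw [hgq]
            intro hc
            rw [hK'def, Finset.mem_sdiff] at hc
            exact hc.2 (List.mem_toFinset.mpr huc)
          · subst h
            intro hc
            rw [hK'def, Finset.mem_sdiff] at hc
            apply hc.2
            apply List.mem_toFinset.mpr
            have hppq : pp q < c.length := lt_trans (hpp q h0q hq) hq
            rw [← hv (pp q) hppq]
            exact List.get_mem _ _
          · subst h
            intro hc
            rw [hK'def, Finset.mem_sdiff] at hc
            apply hc.2
            apply List.mem_toFinset.mpr
            rw [← hv s hsk]
            exact List.get_mem _ _
          · intro hc
            rw [hK'def, Finset.mem_sdiff] at hc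
            exact h hc.1
        have heq1 : applyWord f w' z u = z u := hunotK' u (by
          rw [hK'def, Finset.mem_sdiff]
          intro hc
          exact hc.2 (List.mem_toFinset.mpr huc))
        have heq2 : f (applyWord f w' z) u = f z u := by
          apply eval_eq_of_agree
          intro j hj
          exact hunotK' j (hdepK' j hj)
        rw [heq1, heq2]
        exact hblock u huc

end BN
namespace BN

variable {n : ℕ}

noncomputable def passWord (S : Finset (Fin n)) : List (Fin n) :=
  List.flatten (List.replicate S.card (S.sort (· ≤ ·)))

noncomputable def stageWords : Finset (Fin n) → List (Fin n) → List (Fin n)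
  | _, [] => []
  | S, i :: rest => (i :: passWord (insert i S)) ++ stageWords (insert i S) rest

theorem passWord_length (S : Finset (Fin n)) : (passWord S).length = S.card * S.card := by
  simp [passWord, List.length_flatten, List.map_replicate, List.sum_replicate,
    smul_eq_mul, Finset.length_sort]

theorem stageWords_length (rest : List (Fin n)) :
    ∀ S, (stageWords S rest).length ≤ rest.length * (n ^ 2 + 1) := by
  induction rest with
  | nil => intro S; simp [stageWords]
  | cons i rest ih =>
    intro S
    have h1 : (insert i S).card ≤ n := by
      have := Finset.card_le_univ (insert i S)
      simpa using this
    simp only [stageWords, List.length_append, List.length_cons]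
    have h2 := passWord_length (insert i S)
    have h3 := ih (insert i S)
    have h4 : (passWord (insert i S)).length ≤ n ^ 2 := by
      rw [h2]
      calc (insert i S).card * (insert i S).card ≤ n * n :=
        Nat.mul_le_mul h1 h1
      _ = n ^ 2 := by ring
    calc (passWord (insert i S)).length + 1 + (stageWords (insert i S) rest).length
        ≤ n ^ 2 + 1 + rest.length * (n ^ 2 + 1) := by omega
      _ = (rest.length + 1) * (n ^ 2 + 1) := by ring

theorem stageWords_fix {f : (Fin n → Bool) → (Fin n → Bool)} (hf : Monotone f)
    (rest : List (Fin n)) :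
    ∀ (S : Finset (Fin n)) (x : Fin n → Bool), FixedOn f S x →
      FixedOn f (S ∪ rest.toFinset) (applyWord f (stageWords S rest) x) := by
  induction rest with
  | nil =>
    intro S x hx
    simpa [stageWords, applyWord] using hx
  | cons i rest ih =>
    intro S x hx
    simp only [stageWords]
    rw [applyWord_append]
    set S' := insert i S with hS'
    have hstep : applyWord f (i :: passWord S') x
        = applyWord f (passWord S') (updateStep f x i) := rfl
    rw [hstep]
    set y := updateStep f x i with hy
    have hpassfix : FixedOn f S' (applyWord f (passWord S') y) := by
      have hsortmem : ∀ a ∈ S'.sort (· ≤ ·), a ∈ S' := fun a ha => (Finset.mem_sort _).mp ha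
      have hsortcov : ∀ a ∈ S', a ∈ S'.sort (· ≤ ·) := fun a ha => (Finset.mem_sort _).mpr ha
      rcases stage_invariant hf hx i with hinv | hinv
      · exact passes_fix_up hf hsortmem hsortcov S'.card y hinv (by omega)
      · exact passes_fix_dn hf hsortmem hsortcov S'.card y hinv (by omega)
    have hres := ih S' _ hpassfix
    have hset : S' ∪ rest.toFinset = S ∪ (i :: rest).toFinset := by
      ext a
      simp only [hS', List.toFinset_cons, Finset.mem_union, Finset.mem_insert,
        List.mem_toFinset]
      tauto
    rw [← hset]
    exact hres

theorem fin_tau_le (E : Fin n → Fin n → Prop) (τ : ℕ)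
    (hτ : IsLeast {m : ℕ | ∃ I : Finset (Fin n), I.card = m ∧
        ∀ l : List (Fin n), IsDiCycle E (↑I)ᶜ l → l.length ≤ 2} τ) : τ ≤ n := by
  apply hτ.2
  refine ⟨Finset.univ, by simp, ?_⟩
  intro l hl
  obtain ⟨h1, _, h3, _, _⟩ := hl
  exfalso
  cases l with
  | nil => exact h1 rfl
  | cons a l' =>
    have := h3 a (by simp)
    simp at this

end BN


/-- if `τ` is the 2-feedback number of the digraph `E` on `n` vertices
(the minimum size of a vertex set whose removal leaves circumference at most 2), then
the family of monotone networks with interaction graph contained in `E` is fixed by a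
word of length at most `τ n² + 3n`. -/
theorem monotone_fixing_word_feedback (n τ : ℕ) (E : Fin n → Fin n → Prop)
    (hτ : IsLeast {m : ℕ | ∃ I : Finset (Fin n), I.card = m ∧
        ∀ l : List (Fin n), IsDiCycle E (↑I)ᶜ l → l.length ≤ 2} τ) :
    ∃ W : List (Fin n), W.length ≤ τ * n ^ 2 + 3 * n ∧
      ∀ f : (Fin n → Bool) → (Fin n → Bool),
        Monotone f → InteractionSubgraph f E → Fixes f W := by
  classical
  obtain ⟨I, hIcard, hIcyc⟩ := hτ.1
  have hτn : τ ≤ n := BN.fin_tau_le E τ hτ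
  set K := Iᶜ with hKdef
  have hKcoe : (↑K : Set (Fin n)) = (↑I)ᶜ := by
    rw [hKdef]
    simp [Finset.coe_compl]
  obtain ⟨w₀, hw₀len, hw₀mem, hw₀fix⟩ := BN.base_word E K (by rw [hKcoe]; exact hIcyc)
  set Ilist := I.sort (· ≤ ·) with hIlist
  set W := w₀ ++ BN.stageWords K Ilist with hW
  refine ⟨W, ?_, ?_⟩
  · have h1 : Ilist.length = τ := by
      rw [hIlist, Finset.length_sort, hIcard]
    have h2 := BN.stageWords_length (n := n) Ilist K
    rw [h1] at h2
    have h3 : K.card ≤ n := by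
      have := Finset.card_le_univ K
      simpa using this
    simp only [hW, List.length_append]
    calc w₀.length + (BN.stageWords K Ilist).length
        ≤ 2 * K.card + τ * (n ^ 2 + 1) := by omega
      _ ≤ 2 * n + τ * n ^ 2 + τ := by nlinarith
      _ ≤ τ * n ^ 2 + 3 * n := by omega
  · intro f hf hIG
    intro x
    rw [hW, BN.applyWord_append]
    set z := applyWord f w₀ x with hz
    have hbase : BN.FixedOn f K z := hw₀fix f hf hIG x
    have hstage := BN.stageWords_fix hf Ilist K z hbase
    have huniv : K ∪ Ilist.toFinset = Finset.univ := by
      rw [hIlist, Finset.sort_toFinset, hKdef]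
      ext a
      simp only [Finset.mem_union, Finset.mem_compl, Finset.mem_univ, iff_true]
      tauto
    rw [huniv] at hstage
    funext u
    exact hstage u (Finset.mem_univ u)
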